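/- arXiv:2210.11163 — 5 statements merged into one kernel-verified Lean document; each statement's English description precedes it below -/
import Mathlib

section
/- Let I = [x₁, x_N] ⊂ ℝ with partition x₁ < x₂ < ... < x_N, let u_i : I → [x_i, x_{i+1}] be homeomorphisms with u_i(x₁) = x_i and u_i(x_N) = x_{i+1}, and let v_i : I × ℝ → ℝ be continuous in the first variable and Lipschitz in the second variable with constant |α_i| < 1, satisfying v_i(x₁, y₁) = y_i and v_i(x_N, y_N) = y_{i+1}. Then the Read–Bajraktarević operator Tg(x) := v_i(u_i^{-1}(x), g(u_i^{-1}(x))) for x ∈ u_i(I) is a contraction on the complete metric space 𝒢 = { g ∈ C(I) : g(x₁) = y₁, g(x_N) = y_N } with the sup metric, with contraction factor max_i |α_i|, and hence possesses a unique fixed point f* ∈ 𝒢 satisfying f*(u_i(x)) = v_i(x, f*(x)) for all x ∈ I and each i. -/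
open Set

/-- The Read–Bajraktarević operator associated to interpolation data
`{(x_j, y_j)}`, homeomorphisms `u_i : I → I_i` and maps `v_i` that are continuous in
the first variable and Lipschitz with constant `|α_i| < 1` in the second, is a
contraction on `𝒢 = {g ∈ C(I) : g(x₁) = y₁, g(x_N) = y_N}` with contraction factor
`max_i |α_i|`, and possesses a unique fixed point `f*` in `𝒢` which satisfies the
self-referential equation `f*(u_i(x)) = v_i(x, f*(x))` for all `x ∈ I` and all `i`. -/
theorem readBajraktarevic_contraction
    (N : ℕ) (hN : 0 < N) (x : Fin (N + 1) → ℝ) (hx : StrictMono x)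
    (y : Fin (N + 1) → ℝ)
    (h0 : x 0 ∈ Icc (x 0) (x (Fin.last N))) (hL : x (Fin.last N) ∈ Icc (x 0) (x (Fin.last N)))
    (u : Fin N → Icc (x 0) (x (Fin.last N)) → Icc (x 0) (x (Fin.last N)))
    (hu_cont : ∀ i, Continuous (u i))
    (hu_bij : ∀ i, Function.Injective (u i))
    (hu0 : ∀ i, (u i ⟨x 0, h0⟩ : ℝ) = x i.castSucc)
    (huN : ∀ i, (u i ⟨x (Fin.last N), hL⟩ : ℝ) = x i.succ)
    (v : Fin N → Icc (x 0) (x (Fin.last N)) → ℝ → ℝ)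
    (α : Fin N → ℝ) (hα : ∀ i, |α i| < 1)
    (hv_cont : ∀ i r, Continuous fun t => v i t r)
    (hv_lip : ∀ i t r₁ r₂, |v i t r₁ - v i t r₂| ≤ |α i| * |r₁ - r₂|)
    (hv0 : ∀ i, v i ⟨x 0, h0⟩ (y 0) = y i.castSucc)
    (hvN : ∀ i, v i ⟨x (Fin.last N), hL⟩ (y (Fin.last N)) = y i.succ)
    (hcover : ∀ p : Icc (x 0) (x (Fin.last N)), ∃ i t, u i t = p)
    (T : C(Icc (x 0) (x (Fin.last N)), ℝ) → C(Icc (x 0) (x (Fin.last N)), ℝ))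
    (hT : ∀ g, ∀ i, ∀ t, T g (u i t) = v i t (g t))
    (hT𝒢 : ∀ g : C(Icc (x 0) (x (Fin.last N)), ℝ),
      g ⟨x 0, h0⟩ = y 0 ∧ g ⟨x (Fin.last N), hL⟩ = y (Fin.last N) →
      T g ⟨x 0, h0⟩ = y 0 ∧ T g ⟨x (Fin.last N), hL⟩ = y (Fin.last N)) :
    (∀ g h : C(Icc (x 0) (x (Fin.last N)), ℝ),
        dist (T g) (T h) ≤ (⨆ i, |α i|) * dist g h) ∧
    (⨆ i, |α i|) < 1 ∧
    ∃! fstar : C(Icc (x 0) (x (Fin.last N)), ℝ),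
      (fstar ⟨x 0, h0⟩ = y 0 ∧ fstar ⟨x (Fin.last N), hL⟩ = y (Fin.last N)) ∧
      T fstar = fstar ∧ ∀ i t, fstar (u i t) = v i t (fstar t) := by

  classical
  have iN : Nonempty (Fin N) := ⟨⟨0, hN⟩⟩
  set K : ℝ := ⨆ i, |α i| with hKdef
  have hBdd : BddAbove (Set.range fun i => |α i|) := (Set.finite_range _).bddAbove
  have hKle : ∀ i, |α i| ≤ K := fun i => le_ciSup hBdd i
  have hK0 : 0 ≤ K := (abs_nonneg _).trans (hKle ⟨0, hN⟩)
  obtain ⟨i0, hi0⟩ := Finite.exists_max (fun i => |α i|)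
  have hK1 : K < 1 := lt_of_le_of_lt (ciSup_le hi0) (hα i0)
  -- the contraction estimate
  have hcontr : ∀ g h : C(Icc (x 0) (x (Fin.last N)), ℝ),
      dist (T g) (T h) ≤ K * dist g h := by
    intro g h
    refine (ContinuousMap.dist_le (mul_nonneg hK0 dist_nonneg)).2 ?_
    intro p
    obtain ⟨i, t, hit⟩ := hcover p
    rw [← hit, hT g i t, hT h i t, Real.dist_eq]
    calc |v i t (g t) - v i t (h t)| ≤ |α i| * |g t - h t| := hv_lip i t _ _
      _ ≤ K * dist g h := by
          rw [← Real.dist_eq]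
          exact mul_le_mul (hKle i) (ContinuousMap.dist_apply_le_dist t)
            dist_nonneg hK0
  refine ⟨hcontr, hK1, ?_⟩
  -- Banach fixed point
  have hCW : ContractingWith ⟨K, hK0⟩ T := by
    constructor
    · exact_mod_cast hK1
    · exact LipschitzWith.of_dist_le_mul hcontr
  have hne : Nonempty C(Icc (x 0) (x (Fin.last N)), ℝ) := ⟨0⟩
  set f : C(Icc (x 0) (x (Fin.last N)), ℝ) := ContractingWith.fixedPoint T hCW with hfdef
  have hfix : T f = f := ContractingWith.fixedPoint_isFixedPt hCW
  -- endpoint values: limit of iterates starting in 𝒢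
  have hx0N : x 0 < x (Fin.last N) := hx (by simpa [Fin.lt_def] using hN)
  have hxne : x (Fin.last N) - x 0 ≠ 0 := sub_ne_zero.2 (ne_of_gt hx0N)
  set g0 : C(Icc (x 0) (x (Fin.last N)), ℝ) :=
    ⟨fun p => y 0 + (y (Fin.last N) - y 0) * (((p : ℝ) - x 0) / (x (Fin.last N) - x 0)), by
      fun_prop⟩ with hg0def
  have hg0 : g0 ⟨x 0, h0⟩ = y 0 ∧ g0 ⟨x (Fin.last N), hL⟩ = y (Fin.last N) := by
    constructor
    · simp [hg0def]
    · simp only [hg0def, ContinuousMap.coe_mk]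
      rw [div_self hxne]
      ring
  have hGn : ∀ n, (T^[n] g0) ⟨x 0, h0⟩ = y 0 ∧
      (T^[n] g0) ⟨x (Fin.last N), hL⟩ = y (Fin.last N) := by
    intro n
    induction n with
    | zero => simpa using hg0
    | succ n ih =>
      rw [Function.iterate_succ_apply']
      exact hT𝒢 _ ih
  have htend : Filter.Tendsto (fun n => T^[n] g0) Filter.atTop (nhds f) :=
    ContractingWith.tendsto_iterate_fixedPoint hCW g0
  have hval : ∀ p : Icc (x 0) (x (Fin.last N)), ∀ c : ℝ,
      (∀ n, (T^[n] g0) p = c) → f p = c := by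
    intro p c hc
    have h1 : Filter.Tendsto (fun n => (T^[n] g0) p) Filter.atTop (nhds (f p)) :=
      ((continuous_eval_const p).tendsto f).comp htend
    have h2 : Filter.Tendsto (fun n => (T^[n] g0) p) Filter.atTop (nhds c) := by
      simpa [hc] using tendsto_const_nhds (α := ℝ) (f := Filter.atTop (α := ℕ)) (a := c)
    exact tendsto_nhds_unique h1 h2
  have hf0 : f ⟨x 0, h0⟩ = y 0 := hval _ _ (fun n => (hGn n).1)
  have hfL : f ⟨x (Fin.last N), hL⟩ = y (Fin.last N) := hval _ _ (fun n => (hGn n).2)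
  refine ⟨f, ⟨⟨hf0, hfL⟩, hfix, ?_⟩, ?_⟩
  · intro i t
    conv_lhs => rw [← hfix]
    exact hT f i t
  · rintro f' ⟨-, hfix', -⟩
    exact ContractingWith.fixedPoint_unique hCW hfix'
end

section
/- If b ∈ C(I) satisfies the endpoint conditions and ‖α‖_∞ < 1, and if {b_n} ⊂ C(I) is a sequence of base functions with ‖f − b_n‖_∞ → 0, then the corresponding sequence of α-fractal functions f^α_n (with base function b_n and the same scaling functions α) converges uniformly to f on I. -/
open Set Filter

/-- If `b_n ∈ C(I)` is a sequence of base functions satisfying the endpoint conditions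
with `‖f − b_n‖_∞ → 0`, and `f^α_n` is the α-fractal function of `f` with base `b_n`
(same scaling functions `α`, with `‖α‖_∞ < 1`), then `f^α_n` converges uniformly to
`f` on `I`. -/
theorem alphaFractal_uniform_convergence
    (N : ℕ) (hN : 0 < N) (x : Fin (N + 1) → ℝ) (hx : StrictMono x)
    (h0 : x 0 ∈ Icc (x 0) (x (Fin.last N))) (hL : x (Fin.last N) ∈ Icc (x 0) (x (Fin.last N)))
    (f : C(Icc (x 0) (x (Fin.last N)), ℝ))
    (b : ℕ → C(Icc (x 0) (x (Fin.last N)), ℝ))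
    (hb0 : ∀ n, b n ⟨x 0, h0⟩ = f ⟨x 0, h0⟩)
    (hbN : ∀ n, b n ⟨x (Fin.last N), hL⟩ = f ⟨x (Fin.last N), hL⟩)
    (α : Fin N → C(Icc (x 0) (x (Fin.last N)), ℝ))
    (hα : (⨆ i, ‖α i‖) < 1)
    (u : Fin N → Icc (x 0) (x (Fin.last N)) → Icc (x 0) (x (Fin.last N)))
    (hu0 : ∀ i, (u i ⟨x 0, h0⟩ : ℝ) = x i.castSucc)
    (huN : ∀ i, (u i ⟨x (Fin.last N), hL⟩ : ℝ) = x i.succ)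
    (hcover : ∀ p : Icc (x 0) (x (Fin.last N)), ∃ i t, u i t = p)
    (fα : ℕ → C(Icc (x 0) (x (Fin.last N)), ℝ))
    (hfα : ∀ n i t, fα n (u i t) = f (u i t) + α i t * (fα n t - b n t))
    (hconv : Tendsto (fun n => ‖f - b n‖) atTop (nhds 0)) :
    Tendsto (fun n => ‖fα n - f‖) atTop (nhds 0) := by
  have hNe : Nonempty (Fin N) := ⟨⟨0, hN⟩⟩
  set A : ℝ := ⨆ i, ‖α i‖ with hA
  have hαle : ∀ i, ‖α i‖ ≤ A := fun i =>
    le_ciSup (f := fun i => ‖α i‖) (Set.Finite.bddAbove (Set.finite_range _)) i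
  have hA0 : 0 ≤ A := le_trans (norm_nonneg (α ⟨0, hN⟩)) (hαle ⟨0, hN⟩)
  have key : ∀ n, ‖fα n - f‖ ≤ A * (‖fα n - f‖ + ‖f - b n‖) := by
    intro n
    apply ContinuousMap.norm_le _ (by positivity) |>.2
    intro p
    obtain ⟨i, t, rfl⟩ := hcover p
    have h1 : (fα n - f) (u i t) = α i t * (fα n t - b n t) := by
      simp [hfα n i t]
    rw [h1]
    have h2 : |α i t| ≤ A :=
      le_trans ((α i).norm_coe_le_norm t) (hαle i)
    have h3 : |fα n t - b n t| ≤ ‖fα n - f‖ + ‖f - b n‖ := by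
      have e1 := (fα n - f).norm_coe_le_norm t
      have e2 := (f - b n).norm_coe_le_norm t
      simp only [ContinuousMap.sub_apply, Real.norm_eq_abs] at e1 e2
      calc |fα n t - b n t| = |(fα n t - f t) + (f t - b n t)| := by ring_nf
        _ ≤ |fα n t - f t| + |f t - b n t| := abs_add_le _ _
        _ ≤ ‖fα n - f‖ + ‖f - b n‖ := add_le_add e1 e2
    calc ‖α i t * (fα n t - b n t)‖ = |α i t| * |fα n t - b n t| := abs_mul _ _
      _ ≤ A * (‖fα n - f‖ + ‖f - b n‖) := by
          apply mul_le_mul h2 h3 (abs_nonneg _) hA0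
  have bound : ∀ n, ‖fα n - f‖ ≤ (A / (1 - A)) * ‖f - b n‖ := by
    intro n
    have h := key n
    have h1A : 0 < 1 - A := by linarith
    rw [div_mul_eq_mul_div, le_div_iff₀ h1A]
    nlinarith [norm_nonneg (f - b n)]
  have hzero : Tendsto (fun n => (A / (1 - A)) * ‖f - b n‖) atTop (nhds 0) := by
    simpa using hconv.const_mul (A / (1 - A))
  exact squeeze_zero (fun n => norm_nonneg _) bound hzero
end

section
/- Let f ∈ C(I) with f ≥ 0 on I, and suppose the continuous scaling functions α_i satisfy, for all x ∈ I and each i, max{ −φ(f,i)/(C_n − φ_n), −(C_n − Φ(f,i))/Φ_n } ≤ α_i(x) ≤ min{ φ(f,i)/Φ_n, (C_n − Φ(f,i))/(C_n − φ_n) }, where φ(f,i) = min_x f(u_i(x)), Φ(f,i) = max_x f(u_i(x)), φ_n = min_x M_{n,q}f(x), Φ_n = max_x M_{n,q}f(x), and C_n > max{φ_n, ‖f‖_∞}. Then for all (x,y) ∈ I × [0, C_n] the map v_{n,i}(x,y) = f(u_i(x)) + α_i(x)(y − M_{n,q}f(x)) satisfies 0 ≤ v_{n,i}(x,y) ≤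 C_n. -/
/-- The q-integer `[k]_q`. -/
noncomputable def qInt (q : ℝ) (k : ℕ) : ℝ := if q = 1 then (k : ℝ) else (1 - q ^ k) / (1 - q)

/-- The q-factorial `[k]_q!`. -/
noncomputable def qFactorial (q : ℝ) : ℕ → ℝ
  | 0 => 1
  | k + 1 => qInt q (k + 1) * qFactorial q k

/-- The q-binomial coefficient `(n choose k)_q`. -/
noncomputable def qBinom (q : ℝ) (n k : ℕ) : ℝ :=
  qFactorial q n / (qFactorial q k * qFactorial q (n - k))

/-- The quantum Meyer-König-Zeller operator `M_{n,q}` on `C([x₁, x_N])`. -/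
noncomputable def MKZ (q : ℝ) (n : ℕ) (x₁ xN : ℝ) (f : ℝ → ℝ) (x : ℝ) : ℝ :=
  if x = xN then f xN
  else
    ((∏ j ∈ Finset.range (n + 1), (xN - x₁ - q ^ j * (x - x₁))) / (xN - x₁) ^ (n + 1)) *
      ∑' k : ℕ, qBinom q (n + k) k * ((x - x₁) / (xN - x₁)) ^ k *
        f (x₁ + (xN - x₁) * (qInt q k / qInt q (k + n)))

/-- Invariance of the strip `I × [0, C_n]` under the IFS maps of the positive quantum
MKZ fractal construction: if `f ≥ 0` and the scaling function `α_i` satisfies the stated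
two-sided bounds, then `v_{n,i}(x,y) = f(u_i(x)) + α_i(x)(y − M_{n,q}f(x)) ∈ [0, C_n]`
for all `(x,y) ∈ I × [0, C_n]`. -/
theorem quantum_MKZ_positivity_invariance
    (q : ℝ) (hq : q ∈ Set.Ioc (0:ℝ) 1) (n : ℕ) (x₁ xN : ℝ) (hx : x₁ < xN)
    (f : ℝ → ℝ) (hf : ContinuousOn f (Set.Icc x₁ xN))
    (hfpos : ∀ x ∈ Set.Icc x₁ xN, 0 ≤ f x)
    (u : ℝ → ℝ) (hu : ∀ t ∈ Set.Icc x₁ xN, u t ∈ Set.Icc x₁ xN)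
    (α : ℝ → ℝ) (hαlt : ∀ x ∈ Set.Icc x₁ xN, |α x| < 1)
    (φf Φf φn Φn Cn : ℝ)
    (hφf : IsLeast ((fun t => f (u t)) '' Set.Icc x₁ xN) φf)
    (hΦf : IsGreatest ((fun t => f (u t)) '' Set.Icc x₁ xN) Φf)
    (hφn : IsLeast (MKZ q n x₁ xN f '' Set.Icc x₁ xN) φn)
    (hΦn : IsGreatest (MKZ q n x₁ xN f '' Set.Icc x₁ xN) Φn)
    (hCn1 : φn < Cn) (hCn2 : ∀ x ∈ Set.Icc x₁ xN, |f x| < Cn)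
    (hαbound : ∀ x ∈ Set.Icc x₁ xN,
      max (-φf / (Cn - φn)) (-((Cn - Φf) / Φn)) ≤ α x ∧
      α x ≤ min (φf / Φn) ((Cn - Φf) / (Cn - φn))) :
    ∀ x ∈ Set.Icc x₁ xN, ∀ y ∈ Set.Icc (0:ℝ) Cn,
      f (u x) + α x * (y - MKZ q n x₁ xN f x) ∈ Set.Icc (0:ℝ) Cn := by
  intro x hxI y hy
  obtain ⟨hy0, hyC⟩ := hy
  obtain ⟨hα1, hα2⟩ := hαbound x hxI
  set a := α x with ha
  set M := MKZ q n x₁ xN f x with hM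
  have hMmem : M ∈ MKZ q n x₁ xN f '' Set.Icc x₁ xN := ⟨x, hxI, rfl⟩
  have hMl : φn ≤ M := hφn.2 hMmem
  have hMu : M ≤ Φn := hΦn.2 hMmem
  have hAmem : f (u x) ∈ (fun t => f (u t)) '' Set.Icc x₁ xN := ⟨x, hxI, rfl⟩
  have hAl : φf ≤ f (u x) := hφf.2 hAmem
  have hAu : f (u x) ≤ Φf := hΦf.2 hAmem
  have hφf0 : 0 ≤ φf := by
    obtain ⟨t, ht, hteq⟩ := hφf.1
    rw [← hteq]; exact hfpos _ (hu t ht)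
  have hΦfCn : Φf < Cn := by
    obtain ⟨t, ht, hteq⟩ := hΦf.1
    rw [← hteq]; exact (le_abs_self _).trans_lt (hCn2 _ (hu t ht))
  have hCnφn : 0 < Cn - φn := sub_pos.2 hCn1
  have ha1a : -φf / (Cn - φn) ≤ a := (le_max_left _ _).trans hα1
  have ha1b : -((Cn - Φf) / Φn) ≤ a := (le_max_right _ _).trans hα1
  have ha2a : a ≤ φf / Φn := hα2.trans (min_le_left _ _)
  have ha2b : a ≤ (Cn - Φf) / (Cn - φn) := hα2.trans (min_le_right _ _)
  have h2 : -φf ≤ a * (Cn - φn) := by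
    have := (div_le_iff₀ hCnφn).mp ha1a; linarith
  have h3 : a * (Cn - φn) ≤ Cn - Φf := (le_div_iff₀ hCnφn).mp ha2b
  rcases le_or_gt 0 a with hapos | haneg
  · -- a ≥ 0
    have h1 : a * Φn ≤ φf := by
      rcases le_or_gt Φn 0 with hΦ | hΦ
      · nlinarith
      · exact (le_div_iff₀ hΦ).mp ha2a
    constructor
    · nlinarith [mul_nonneg hapos hy0]
    · nlinarith [mul_le_mul_of_nonneg_left (sub_le_sub hyC hMl) hapos]
  · -- a < 0
    have h4 : -(a * Φn) ≤ Cn - Φf := by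
      rcases le_or_gt Φn 0 with hΦ | hΦ
      · nlinarith
      · have hna : -a ≤ (Cn - Φf) / Φn := neg_le_of_neg_le ha1b
        nlinarith [(le_div_iff₀ hΦ).mp hna]
    constructor
    · nlinarith [mul_le_mul_of_nonpos_left (sub_le_sub hyC hMl) haneg.le]
    · nlinarith [mul_le_mul_of_nonpos_left (sub_le_sub hy0 hMu) haneg.le]
end

section
/- Let f, g ∈ C(I) with f ≥ g on I, and suppose 0 ≤ α_i(x) ≤ min{ φ(f−g,i)/(Φ_n(f) − φ(g)), 1 } for all x ∈ I, where φ(f−g,i) = min_x (f−g)(u_i(x)), Φ_n(f) = max_x M_{n,q_n}f(x), φ(g) = min_x g(x). Then f(u_i(x)) + α_i(x)(y − M_{n,q_n}f(x)) ≥ g(u_i(x)) for every x ∈ I and every y with y ≥ g(x). -/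
/-- Key invariance step for one-sided approximation: if `f ≥ g` on `I` and
`0 ≤ α_i(x) ≤ min{ φ(f−g,i)/(Φ_n(f) − φ(g)), 1 }`, then
`f(u_i(x)) + α_i(x)(y − M_{n,q_n}f(x)) ≥ g(u_i(x))` for every `x ∈ I` and `y ≥ g(x)`. -/
theorem quantum_MKZ_one_sided_invariance
    (q : ℝ) (hq : q ∈ Set.Ioc (0:ℝ) 1) (n : ℕ) (x₁ xN : ℝ) (hx : x₁ < xN)
    (f g : ℝ → ℝ)
    (hf : ContinuousOn f (Set.Icc x₁ xN)) (hg : ContinuousOn g (Set.Icc x₁ xN))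
    (hfg : ∀ x ∈ Set.Icc x₁ xN, g x ≤ f x)
    (u : ℝ → ℝ) (hu : ∀ t ∈ Set.Icc x₁ xN, u t ∈ Set.Icc x₁ xN)
    (α : ℝ → ℝ)
    (φfg Φnf φg : ℝ)
    (hφfg : IsLeast ((fun t => f (u t) - g (u t)) '' Set.Icc x₁ xN) φfg)
    (hΦnf : IsGreatest (MKZ q n x₁ xN f '' Set.Icc x₁ xN) Φnf)
    (hφg : IsLeast (g '' Set.Icc x₁ xN) φg)
    (hαbound : ∀ x ∈ Set.Icc x₁ xN,
      0 ≤ α x ∧ α x ≤ min (φfg / (Φnf - φg)) 1) :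
    ∀ x ∈ Set.Icc x₁ xN, ∀ y : ℝ, g x ≤ y →
      g (u x) ≤ f (u x) + α x * (y - MKZ q n x₁ xN f x) := by

  intro x hxI y hy
  obtain ⟨hα0, hα1⟩ := hαbound x hxI
  -- φfg ≥ 0
  have hφfg0 : 0 ≤ φfg := by
    obtain ⟨⟨t, ht, hteq⟩, _⟩ := hφfg
    have := hfg (u t) (hu t ht)
    simp only at hteq
    linarith
  have hφfg_le : φfg ≤ f (u x) - g (u x) := hφfg.2 ⟨x, hxI, rfl⟩
  rcases le_or_gt (MKZ q n x₁ xN f x) y with hcase | hcase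
  · nlinarith
  · -- MKZ f x > y ≥ g x ≥ φg, MKZ f x ≤ Φnf
    have hM : MKZ q n x₁ xN f x ≤ Φnf := hΦnf.2 ⟨x, hxI, rfl⟩
    have hgx : φg ≤ g x := hφg.2 ⟨x, hxI, rfl⟩
    have hpos : 0 < Φnf - φg := by linarith
    have hr : 0 ≤ φfg / (Φnf - φg) := div_nonneg hφfg0 hpos.le
    have hα' : α x ≤ φfg / (Φnf - φg) := le_trans hα1 (min_le_left _ _)
    have h1 : α x * (MKZ q n x₁ xN f x - y) ≤ (φfg / (Φnf - φg)) * (Φnf - φg) := by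
      apply mul_le_mul hα' (by linarith) (by linarith) hr
    rw [div_mul_cancel₀ _ hpos.ne'] at h1
    nlinarith
end

section
/- Let f ∈ C(I) be convex, let all scaling functions satisfy 0 ≤ α_i(x) < 1, and suppose the classical MKZ operator satisfies M_n f ≥ f on I. If h ∈ C(I) satisfies h ≤ f and h(u_i(x)) = f(u_i(x)) + α_i(x)(h(x) − M_n f(x)) for all x ∈ I and all i, then h(u_i(x)) − f(u_i(x)) ≤ α_i(x)(h(x) − f(x)) ≤ 0 for all x, i.e., the fractal function lies below its germ: f_n^{(q,α)} ≤ f on I. -/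
/-- For convex `f` with nonnegative scaling functions, the MKZ fractal function lies
below its germ: if `M_n f ≥ f` on `I` (Trif) and `h ≤ f` satisfies the self-referential
equation `h(u_i(x)) = f(u_i(x)) + α_i(x)(h(x) − M_n f(x))`, then
`h(u_i(x)) − f(u_i(x)) ≤ α_i(x)(h(x) − f(x)) ≤ 0` for all `x ∈ I` and all `i`. -/
theorem MKZ_fractal_below_germ
    (n : ℕ) (x₁ xN : ℝ) (hx : x₁ < xN)
    (f : ℝ → ℝ) (hf : ContinuousOn f (Set.Icc x₁ xN))
    (hconv : ConvexOn ℝ (Set.Icc x₁ xN) f)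
    (N : ℕ) (hN : 0 < N)
    (u : Fin N → ℝ → ℝ) (hu : ∀ i, ∀ t ∈ Set.Icc x₁ xN, u i t ∈ Set.Icc x₁ xN)
    (α : Fin N → ℝ → ℝ)
    (hα : ∀ i, ∀ x ∈ Set.Icc x₁ xN, 0 ≤ α i x ∧ α i x < 1)
    (hMge : ∀ x ∈ Set.Icc x₁ xN, f x ≤ MKZ 1 n x₁ xN f x)
    (h : ℝ → ℝ) (hhf : ∀ x ∈ Set.Icc x₁ xN, h x ≤ f x)
    (hself : ∀ i, ∀ x ∈ Set.Icc x₁ xN,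
      h (u i x) = f (u i x) + α i x * (h x - MKZ 1 n x₁ xN f x)) :
    ∀ i, ∀ x ∈ Set.Icc x₁ xN,
      h (u i x) - f (u i x) ≤ α i x * (h x - f x) ∧ α i x * (h x - f x) ≤ 0 := by
  intro i x hxI
  obtain ⟨ha0, _⟩ := hα i x hxI
  have h1 : h x - MKZ 1 n x₁ xN f x ≤ h x - f x := by linarith [hMge x hxI]
  constructor
  · rw [hself i x hxI]
    have := mul_le_mul_of_nonneg_left h1 ha0
    linarith
  · exact mul_nonpos_of_nonneg_of_nonpos ha0 (by linarith [hhf x hxI])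
end
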